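/- Fix integers n ≥ 1, 1 ≤ h ≤ n, 0 ≤ l ≤ n−1 and reals λ ∈ (0,1], θ ∈ (0,1), and let q^{(n,h)}_0, …, q^{(n,h)}_{n−l−1} ∈ ℝ[j,k] be the coefficients of the quotient polynomial Q_{n,h,l}. Then: (a) for every 1 ≤ i ≤ n−l−1, Σ_{u=0}^{h−1} (−1)^u C(h−1,u) u^l Σ_{v=0}^{n−h} (−1)^{n−h−v} C(n−h,v) q^{(n,h)}_{n−l−1−i}(u,v) = 0; (b) if 0 ≤ l ≤ h−1, then Σ_{u=0}^{h−1} (−1)^u C(h−1,u) u^l Σ_{v=0}^{n−h} (−1)^{n−h−v} C(n−h,v) q^{(n,h)}_{n−l−1}(u,v) = (−1)^{h−1}(h−1)!(n−h)! · c^{(λ,θ)}_{n,h,l}, where c^{(λ,θ)}_{n,h,l} is the coefficient of the monomial j^{h−l−1}k^{n−h} in q^{(n,h)}_{n−l−1}; and if h ≤ l ≤ n−1, this double sum is 0. (Here q^{(n,h)}_i(u,v) denotes evaluation of the bivariate polynomial at (j,k) = (u,v), with the convention 0^0 = 1.) -/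

import Mathlib

open Polynomial

/-- Rising factorial in a commutative ring: `(a)_m = a (a+1) ⋯ (a+m−1)`, with `(a)_0 = 1`. -/
noncomputable def rfp {S : Type*} [CommRing S] (a : S) (m : ℕ) : S :=
  ∏ i ∈ Finset.range m, (a + (i : S))

/-- The base ring `R = ℝ[j,k]`. -/
abbrev R2 : Type := MvPolynomial (Fin 2) ℝ

/-- The variable `j` as a constant of `R[d]`. -/
noncomputable def Jv : Polynomial R2 := Polynomial.C (MvPolynomial.X 0)

/-- The variable `k` as a constant of `R[d]`. -/
noncomputable def Kv : Polynomial R2 := Polynomial.C (MvPolynomial.X 1)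

/-- Embedding of real scalars into `R[d]`. -/
noncomputable def cst (x : ℝ) : Polynomial R2 := Polynomial.C (MvPolynomial.C x)

/-- The dividend `P_{n,h}` in the polynomial long division (an element of `ℝ[j,k][d]`). -/
noncomputable def Pnh (n h : ℕ) (lam th : ℝ) : Polynomial R2 :=
  (X - 2 * Jv - 1) * (X + 2 * (h : Polynomial R2) - 2 * Jv - 1) * rfp (X - Jv) h *
    rfp (cst (1 - th) * X - Jv) h *
    rfp (cst (lam * th) * X + (h : Polynomial R2) - (n : Polynomial R2) - Jv + Kv) n *
    rfp (cst th * X + (h : Polynomial R2) - (n : Polynomial R2) - Jv + Kv) n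

/-- The divisor `D_{n,h,l}` in the polynomial long division (an element of `ℝ[j,k][d]`). -/
noncomputable def Dnhl (n h l : ℕ) (lam th : ℝ) : Polynomial R2 :=
  cst (lam * th) * X ^ (l + 1) * (X + (h : Polynomial R2) - 2 * Jv - 1) *
    rfp (cst th * X - Jv) h *
    rfp (X - (n : Polynomial R2) + (h : Polynomial R2) - 2 * Jv - 1 + Kv) (n + h + 1)

def HW (F : Polynomial R2) (W : ℕ) : Prop :=
  ∀ e, F.coeff e ≠ 0 → (F.coeff e).totalDegree + e ≤ W

lemma fd_rec (m : ℕ) (g : ℕ → ℝ) :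
    ∑ u ∈ Finset.range (m+2), (-1:ℝ)^u * ((m+1).choose u : ℝ) * g u
      = ∑ u ∈ Finset.range (m+1), (-1:ℝ)^u * (m.choose u : ℝ) * (g u - g (u+1)) := by
  rw [Finset.sum_range_succ' (fun u => (-1:ℝ)^u * ((m+1).choose u : ℝ) * g u)]
  have h1 : ∀ u : ℕ, (-1:ℝ)^(u+1) * ((m+1).choose (u+1) : ℝ) * g (u+1)
      = -((-1:ℝ)^u * (m.choose u : ℝ) * g (u+1)) - (-1:ℝ)^u * (m.choose (u+1) : ℝ) * g (u+1) := by
    intro u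
    rw [Nat.choose_succ_succ]
    push_cast
    ring
  simp only [h1]
  rw [Finset.sum_sub_distrib]
  have h2 : ∑ u ∈ Finset.range (m+1), (-1:ℝ)^u * (m.choose (u+1) : ℝ) * g (u+1)
      = g 0 - ∑ u ∈ Finset.range (m+1), (-1:ℝ)^u * (m.choose u : ℝ) * g u := by
    have h5 := Finset.sum_range_succ' (fun u => (-1:ℝ)^u * (m.choose u : ℝ) * g u) (m+1)
    have h3 : ∑ u ∈ Finset.range (m+2), (-1:ℝ)^u * (m.choose u : ℝ) * g u
        = ∑ u ∈ Finset.range (m+1), (-1:ℝ)^u * (m.choose u : ℝ) * g u := by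
      rw [Finset.sum_range_succ]
      simp [Nat.choose_succ_self]
    have h4 : ∀ u : ℕ, (-1:ℝ)^(u+1) * (m.choose (u+1) : ℝ) * g (u+1)
        = -((-1:ℝ)^u * (m.choose (u+1) : ℝ) * g (u+1)) := by intro u; ring
    rw [h3] at h5
    simp only [h4] at h5
    rw [Finset.sum_neg_distrib] at h5
    simp only [pow_zero, Nat.choose_zero_right, Nat.cast_one, one_mul, mul_one] at h5
    linarith [h5]
  rw [h2]
  rw [show (∑ u ∈ Finset.range (m+1), (-1:ℝ)^u * (m.choose u : ℝ) * (g u - g (u+1)))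
      = ∑ u ∈ Finset.range (m+1), ((-1:ℝ)^u * (m.choose u : ℝ) * g u
        + -((-1:ℝ)^u * (m.choose u : ℝ) * g (u+1))) from Finset.sum_congr rfl (by intros; ring)]
  rw [Finset.sum_add_distrib]
  simp only [Nat.choose_zero_right, Nat.cast_one, pow_zero, one_mul]
  ring

lemma binom_diff (p u : ℕ) : ((u:ℝ))^p - ((u:ℝ)+1)^p
    = -∑ q ∈ Finset.range p, (p.choose q : ℝ) * (u:ℝ)^q := by
  have := add_pow (u:ℝ) 1 p
  simp only [one_pow, mul_one] at this
  rw [this, Finset.sum_range_succ]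
  simp only [Nat.choose_self, Nat.cast_one, mul_one]
  rw [Finset.sum_congr rfl (fun q _ => by ring :
    ∀ q ∈ Finset.range p, (u:ℝ)^q * (p.choose q : ℝ) = (p.choose q : ℝ) * (u:ℝ)^q)]
  ring

lemma fd_lt : ∀ m p : ℕ, p < m →
    ∑ u ∈ Finset.range (m+1), (-1:ℝ)^u * (m.choose u : ℝ) * (u:ℝ)^p = 0 := by
  intro m
  induction m with
  | zero => intro p hp; omega
  | succ m IH =>
    intro p hp
    rw [show m + 1 + 1 = m + 2 from rfl, fd_rec m (fun u => (u:ℝ)^p)]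
    have : ∀ u ∈ Finset.range (m+1), (-1:ℝ)^u * (m.choose u : ℝ) * (((u:ℕ):ℝ)^p - (((u:ℕ):ℝ)+1)^p)
        = ∑ q ∈ Finset.range p, -((p.choose q : ℝ) * ((-1:ℝ)^u * (m.choose u : ℝ) * (u:ℝ)^q)) := by
      intro u _
      rw [show (((u:ℕ):ℝ)+1) = (((u+1:ℕ)):ℝ) by push_cast; ring] at *
      rw [show ((u:ℝ))^p - ((u+1:ℕ):ℝ)^p = -∑ q ∈ Finset.range p, (p.choose q : ℝ) * (u:ℝ)^q by
        have := binom_diff p u; push_cast at this ⊢; linarith]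
      rw [mul_neg, Finset.mul_sum, ← Finset.sum_neg_distrib]
      exact Finset.sum_congr rfl (fun q _ => by ring)
    rw [Finset.sum_congr rfl (by
      intro u hu
      have := this u hu
      push_cast at this ⊢
      exact this)]
    rw [Finset.sum_comm]
    apply Finset.sum_eq_zero
    intro q hq
    have hql : q < m := by
      have := Finset.mem_range.mp hq; omega
    rw [show (∑ u ∈ Finset.range (m+1), -((p.choose q : ℝ) * ((-1:ℝ)^u * (m.choose u : ℝ) * (u:ℝ)^q)))
        = -((p.choose q : ℝ) * ∑ u ∈ Finset.range (m+1), (-1:ℝ)^u * (m.choose u : ℝ) * (u:ℝ)^q) by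
      rw [Finset.mul_sum, Finset.sum_neg_distrib]]
    rw [IH q hql]
    ring

lemma fd_eq : ∀ m : ℕ,
    ∑ u ∈ Finset.range (m+1), (-1:ℝ)^u * (m.choose u : ℝ) * (u:ℝ)^m
      = (-1:ℝ)^m * (m.factorial : ℝ) := by
  intro m
  induction m with
  | zero => simp
  | succ m IH =>
    rw [show m + 1 + 1 = m + 2 from rfl, fd_rec m (fun u => (u:ℝ)^(m+1))]
    have : ∀ u ∈ Finset.range (m+1), (-1:ℝ)^u * (m.choose u : ℝ) * (((u:ℕ):ℝ)^(m+1) - (((u:ℕ):ℝ)+1)^(m+1))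
        = ∑ q ∈ Finset.range (m+1), -(((m+1).choose q : ℝ) * ((-1:ℝ)^u * (m.choose u : ℝ) * (u:ℝ)^q)) := by
      intro u _
      rw [show ((u:ℝ))^(m+1) - ((u:ℝ)+1)^(m+1) = -∑ q ∈ Finset.range (m+1), ((m+1).choose q : ℝ) * (u:ℝ)^q from binom_diff (m+1) u]
      rw [mul_neg, Finset.mul_sum, ← Finset.sum_neg_distrib]
      exact Finset.sum_congr rfl (fun q _ => by ring)
    rw [Finset.sum_congr rfl (by
      intro u hu
      have := this u hu
      push_cast at this ⊢
      exact this), Finset.sum_comm]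
    rw [Finset.sum_eq_single m]
    · rw [show (∑ u ∈ Finset.range (m+1), -(((m+1).choose m : ℝ) * ((-1:ℝ)^u * (m.choose u : ℝ) * (u:ℝ)^m)))
          = -(((m+1).choose m : ℝ) * ∑ u ∈ Finset.range (m+1), (-1:ℝ)^u * (m.choose u : ℝ) * (u:ℝ)^m) by
        rw [Finset.mul_sum, Finset.sum_neg_distrib]]
      rw [IH, Nat.choose_succ_self_right, Nat.factorial_succ]
      push_cast
      ring
    · intro q hq hqm
      have hql : q < m := by have := Finset.mem_range.mp hq; omega
      rw [show (∑ u ∈ Finset.range (m+1), -(((m+1).choose q : ℝ) * ((-1:ℝ)^u * (m.choose u : ℝ) * (u:ℝ)^q)))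
          = -(((m+1).choose q : ℝ) * ∑ u ∈ Finset.range (m+1), (-1:ℝ)^u * (m.choose u : ℝ) * (u:ℝ)^q) by
        rw [Finset.mul_sum, Finset.sum_neg_distrib]]
      rw [fd_lt m q hql]
      ring
    · intro hm; exact absurd (Finset.self_mem_range_succ m) hm


lemma HW_mono {F : Polynomial R2} {A B : ℕ} (hF : HW F A) (hAB : A ≤ B) : HW F B :=
  fun e he => le_trans (hF e he) hAB

lemma HW_C (c : R2) : HW (Polynomial.C c) c.totalDegree := by
  intro e he
  rcases eq_or_ne e 0 with rfl | h0
  · simp [Polynomial.coeff_C]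
  · simp [Polynomial.coeff_C, h0] at he

lemma HW_X : HW (X : Polynomial R2) 1 := by
  intro e he
  rcases eq_or_ne e 1 with rfl | h1
  · simp [Polynomial.coeff_X]
  · simp [Polynomial.coeff_X, Ne.symm h1] at he

lemma HW_add {F G : Polynomial R2} {A B : ℕ} (hF : HW F A) (hG : HW G B) :
    HW (F + G) (max A B) := by
  intro e he
  rw [Polynomial.coeff_add] at he ⊢
  have h1 : (F.coeff e + G.coeff e).totalDegree ≤ max (F.coeff e).totalDegree (G.coeff e).totalDegree :=
    MvPolynomial.totalDegree_add _ _
  rcases eq_or_ne (F.coeff e) 0 with hF0 | hF0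
  · rcases eq_or_ne (G.coeff e) 0 with hG0 | hG0
    · exact absurd (by rw [hF0, hG0, add_zero]) he
    · rw [hF0, zero_add]
      exact le_trans (hG e hG0) (le_max_right A B)
  · rcases eq_or_ne (G.coeff e) 0 with hG0 | hG0
    · rw [hG0, add_zero]
      exact le_trans (hF e hF0) (le_max_left A B)
    · calc (F.coeff e + G.coeff e).totalDegree + e
          ≤ max (F.coeff e).totalDegree (G.coeff e).totalDegree + e := Nat.add_le_add_right h1 e
        _ = max ((F.coeff e).totalDegree + e) ((G.coeff e).totalDegree + e) :=
            (max_add_add_right _ _ _).symm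
        _ ≤ max A B := max_le_max (hF e hF0) (hG e hG0)

lemma HW_neg {F : Polynomial R2} {A : ℕ} (hF : HW F A) : HW (-F) A := by
  intro e he
  rw [Polynomial.coeff_neg] at he ⊢
  rw [MvPolynomial.totalDegree_neg]
  exact hF e (by simpa using he)

lemma HW_sub {F G : Polynomial R2} {A B : ℕ} (hF : HW F A) (hG : HW G B) :
    HW (F - G) (max A B) := by
  rw [sub_eq_add_neg]; exact HW_add hF (HW_neg hG)

lemma HW_mul {F G : Polynomial R2} {A B : ℕ} (hF : HW F A) (hG : HW G B) :
    HW (F * G) (A + B) := by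
  intro e he
  rw [Polynomial.coeff_mul] at he ⊢
  obtain ⟨⟨a, b⟩, hab, hterm⟩ := Finset.exists_ne_zero_of_sum_ne_zero he
  have hab' : a + b = e := Finset.HasAntidiagonal.mem_antidiagonal.mp hab
  have hFa : F.coeff a ≠ 0 := fun hz => hterm (by rw [hz, zero_mul])
  have hGb : G.coeff b ≠ 0 := fun hz => hterm (by rw [hz, mul_zero])
  have heAB : e ≤ A + B := by
    have := hF a hFa; have := hG b hGb; omega
  have hsum : (∑ x ∈ Finset.HasAntidiagonal.antidiagonal e, F.coeff x.1 * G.coeff x.2).totalDegree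
      ≤ A + B - e := by
    apply le_trans (MvPolynomial.totalDegree_finset_sum _ _)
    apply Finset.sup_le
    rintro ⟨a', b'⟩ hab2
    show (F.coeff a' * G.coeff b').totalDegree ≤ A + B - e
    have hab2' : a' + b' = e := Finset.HasAntidiagonal.mem_antidiagonal.mp hab2
    rcases eq_or_ne (F.coeff a') 0 with h0 | h0
    · simp [h0]
    rcases eq_or_ne (G.coeff b') 0 with h1 | h1
    · simp [h1]
    have := hF a' h0
    have := hG b' h1
    have := MvPolynomial.totalDegree_mul (F.coeff a') (G.coeff b')
    omega
  omega

lemma HW_one : HW (1 : Polynomial R2) 0 := by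
  have := HW_C (1 : R2)
  simpa using this

lemma HW_natCast (p : ℕ) : HW ((p : Polynomial R2)) 0 := by
  have h := HW_C ((p : R2))
  have h2 : ((p : R2)).totalDegree = 0 := by
    rw [show ((p : ℕ) : R2) = MvPolynomial.C ((p : ℕ) : ℝ) from (map_natCast MvPolynomial.C p).symm,
      MvPolynomial.totalDegree_C]
  rw [h2] at h
  rwa [show Polynomial.C ((p : ℕ) : R2) = ((p : ℕ) : Polynomial R2) from map_natCast Polynomial.C p]
    at h

lemma HW_two : HW (2 : Polynomial R2) 0 := by
  have := HW_natCast 2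
  simpa using this

lemma HW_cst (x : ℝ) : HW (cst x) 0 := by
  have := HW_C (MvPolynomial.C x : R2)
  rw [MvPolynomial.totalDegree_C] at this
  exact this

lemma HW_Jv : HW Jv 1 := by
  have := HW_C (MvPolynomial.X 0 : R2)
  rwa [MvPolynomial.totalDegree_X] at this

lemma HW_Kv : HW Kv 1 := by
  have := HW_C (MvPolynomial.X 1 : R2)
  rwa [MvPolynomial.totalDegree_X] at this

lemma HW_pow {F : Polynomial R2} {A : ℕ} (hF : HW F A) (p : ℕ) : HW (F ^ p) (p * A) := by
  induction p with
  | zero => simpa using HW_one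
  | succ p IH =>
    rw [pow_succ]
    have := HW_mul IH hF
    rwa [show p * A + A = (p+1) * A by ring] at this

lemma HW_rfp {F : Polynomial R2} (hF : HW F 1) (p : ℕ) : HW (rfp F p) p := by
  induction p with
  | zero => simpa [rfp] using HW_one
  | succ p IH =>
    rw [rfp, Finset.prod_range_succ, ← rfp]
    have hfac : HW (F + (p : Polynomial R2)) 1 := by
      simpa using HW_add hF (HW_natCast p)
    have := HW_mul IH hfac
    rwa [show p + 1 = p + 1 from rfl] at this

lemma HW_lin1 : HW (X - 2 * Jv - 1 : Polynomial R2) 1 :=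
  HW_mono (HW_sub (HW_sub HW_X (by simpa using HW_mul HW_two HW_Jv)) HW_one) (by simp)

lemma HW_P (n h : ℕ) (lam th : ℝ) : HW (Pnh n h lam th) (2*n + 2*h + 2) := by
  have f1 : HW (X - 2 * Jv - 1 : Polynomial R2) 1 := HW_lin1
  have f2 : HW (X + 2 * (h : Polynomial R2) - 2 * Jv - 1 : Polynomial R2) 1 :=
    HW_mono (HW_sub (HW_sub (HW_add HW_X (by simpa using HW_mul HW_two (HW_natCast h)))
      (by simpa using HW_mul HW_two HW_Jv)) HW_one) (by simp)
  have f3 : HW (rfp (X - Jv) h) h := HW_rfp (HW_mono (HW_sub HW_X HW_Jv) (by simp)) h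
  have f4 : HW (rfp (cst (1 - th) * X - Jv) h) h :=
    HW_rfp (HW_mono (HW_sub (by simpa using HW_mul (HW_cst (1-th)) HW_X) HW_Jv) (by simp)) h
  have arg5 : HW (cst (lam * th) * X + (h : Polynomial R2) - (n : Polynomial R2) - Jv + Kv) 1 :=
    HW_mono (HW_add (HW_sub (HW_sub (HW_add (by simpa using HW_mul (HW_cst (lam*th)) HW_X)
      (HW_natCast h)) (HW_natCast n)) HW_Jv) HW_Kv) (by simp)
  have f5 : HW (rfp (cst (lam * th) * X + (h : Polynomial R2) - (n : Polynomial R2) - Jv + Kv) n) n :=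
    HW_rfp arg5 n
  have arg6 : HW (cst th * X + (h : Polynomial R2) - (n : Polynomial R2) - Jv + Kv) 1 :=
    HW_mono (HW_add (HW_sub (HW_sub (HW_add (by simpa using HW_mul (HW_cst th) HW_X)
      (HW_natCast h)) (HW_natCast n)) HW_Jv) HW_Kv) (by simp)
  have f6 : HW (rfp (cst th * X + (h : Polynomial R2) - (n : Polynomial R2) - Jv + Kv) n) n :=
    HW_rfp arg6 n
  have := HW_mul (HW_mul (HW_mul (HW_mul (HW_mul f1 f2) f3) f4) f5) f6
  unfold Pnh
  exact HW_mono this (by omega)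

lemma HW_D (n h l : ℕ) (lam th : ℝ) : HW (Dnhl n h l lam th) (n + 2*h + l + 3) := by
  have f1 : HW (cst (lam * th) * X ^ (l+1)) (l+1) := by
    simpa using HW_mul (HW_cst (lam*th)) (by simpa using HW_pow HW_X (l+1))
  have f2 : HW (X + (h : Polynomial R2) - 2 * Jv - 1 : Polynomial R2) 1 :=
    HW_mono (HW_sub (HW_sub (HW_add HW_X (HW_natCast h))
      (by simpa using HW_mul HW_two HW_Jv)) HW_one) (by simp)
  have f3 : HW (rfp (cst th * X - Jv) h) h :=
    HW_rfp (HW_mono (HW_sub (by simpa using HW_mul (HW_cst th) HW_X) HW_Jv) (by simp)) h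
  have arg4 : HW (X - (n : Polynomial R2) + (h : Polynomial R2) - 2 * Jv - 1 + Kv) 1 :=
    HW_mono (HW_add (HW_sub (HW_sub (HW_add (HW_sub HW_X (HW_natCast n)) (HW_natCast h))
      (by simpa using HW_mul HW_two HW_Jv)) HW_one) HW_Kv) (by simp)
  have f4 : HW (rfp (X - (n : Polynomial R2) + (h : Polynomial R2) - 2 * Jv - 1 + Kv) (n+h+1)) (n+h+1) :=
    HW_rfp arg4 (n+h+1)
  have := HW_mul (HW_mul (HW_mul f1 f2) f3) f4
  unfold Dnhl
  exact HW_mono (by rw [mul_assoc (cst (lam*th))] at this ⊢; exact this) (by omega)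

lemma lin_ne (c₁ c₀ : R2) (hc : c₁ ≠ 0) : (Polynomial.C c₁ * X + Polynomial.C c₀) ≠ 0 := by
  intro hz
  have := Polynomial.natDegree_linear hc (b := c₀)
  rw [hz] at this
  simp at this

lemma rfp_lin (c₁ c₀ : R2) (hc : c₁ ≠ 0) (m : ℕ) :
    (rfp (Polynomial.C c₁ * X + Polynomial.C c₀) m).natDegree = m ∧
    (rfp (Polynomial.C c₁ * X + Polynomial.C c₀) m).leadingCoeff = c₁ ^ m := by
  have hfac : ∀ i : ℕ, (Polynomial.C c₁ * X + Polynomial.C c₀ + (i : Polynomial R2))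
      = Polynomial.C c₁ * X + Polynomial.C (c₀ + i) := by
    intro i
    rw [map_add, map_natCast]
    ring
  have hd : ∀ i ∈ Finset.range m,
      (Polynomial.C c₁ * X + Polynomial.C c₀ + (i : Polynomial R2)).natDegree = 1 := by
    intro i _; rw [hfac i]; exact Polynomial.natDegree_linear hc
  have hl : ∀ i ∈ Finset.range m,
      (Polynomial.C c₁ * X + Polynomial.C c₀ + (i : Polynomial R2)).leadingCoeff = c₁ := by
    intro i _; rw [hfac i]; exact Polynomial.leadingCoeff_linear hc
  unfold rfp
  constructor
  · rw [Polynomial.natDegree_prod (s := Finset.range m) (f := fun i : ℕ => Polynomial.C c₁ * X + Polynomial.C c₀ + (i : Polynomial R2)) (fun i _ => by rw [hfac i]; exact lin_ne _ _ hc)]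
    rw [Finset.sum_congr rfl hd]
    simp
  · rw [Polynomial.leadingCoeff_prod]
    rw [Finset.prod_congr rfl hl]
    simp

lemma D_facts (n h l : ℕ) (lam th : ℝ) (hlt : lam * th ≠ 0) (hth : th ≠ 0) :
    (Dnhl n h l lam th).natDegree = n + 2*h + l + 3 ∧
    (Dnhl n h l lam th).leadingCoeff = MvPolynomial.C (lam * th * th ^ h) := by
  have hC1 : (MvPolynomial.C (lam * th) : R2) ≠ 0 := by
    simpa using hlt
  have hCth : (MvPolynomial.C th : R2) ≠ 0 := by simpa using hth
  -- factor 1 : cst (lam*th) * X^(l+1)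
  have g1d : (cst (lam*th) * X^(l+1) : Polynomial R2).natDegree = l + 1 := by
    rw [cst, Polynomial.natDegree_C_mul_X_pow _ _ hC1]
  have g1l : (cst (lam*th) * X^(l+1) : Polynomial R2).leadingCoeff = MvPolynomial.C (lam*th) := by
    rw [cst, Polynomial.leadingCoeff_C_mul_X_pow]
  have g1ne : (cst (lam*th) * X^(l+1) : Polynomial R2) ≠ 0 := by
    intro hz
    rw [Polynomial.leadingCoeff_eq_zero.mpr hz] at g1l
    exact hC1 g1l.symm
  -- factor 2
  have e2 : (X + (h : Polynomial R2) - 2 * Jv - 1 : Polynomial R2)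
      = Polynomial.C (1 : R2) * X + Polynomial.C ((h : R2) - 2 * MvPolynomial.X 0 - 1) := by
    simp only [Jv, map_one, one_mul, map_sub, map_mul, map_ofNat, map_natCast]
    ring
  have g2d : (X + (h : Polynomial R2) - 2 * Jv - 1 : Polynomial R2).natDegree = 1 := by
    rw [e2]; exact Polynomial.natDegree_linear one_ne_zero
  have g2l : (X + (h : Polynomial R2) - 2 * Jv - 1 : Polynomial R2).leadingCoeff = 1 := by
    rw [e2]; exact Polynomial.leadingCoeff_linear one_ne_zero
  have g2ne : (X + (h : Polynomial R2) - 2 * Jv - 1 : Polynomial R2) ≠ 0 := by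
    rw [e2]; exact lin_ne _ _ one_ne_zero
  -- factor 3
  have e3 : (cst th * X - Jv : Polynomial R2)
      = Polynomial.C (MvPolynomial.C th) * X + Polynomial.C (- MvPolynomial.X 0) := by
    simp only [cst, Jv, map_neg]
    ring
  have g3d : (rfp (cst th * X - Jv) h).natDegree = h := by
    rw [e3]; exact (rfp_lin _ _ hCth h).1
  have g3l : (rfp (cst th * X - Jv) h).leadingCoeff = (MvPolynomial.C th) ^ h := by
    rw [e3]; exact (rfp_lin _ _ hCth h).2
  have g3ne : (rfp (cst th * X - Jv) h) ≠ 0 := by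
    intro hz
    rw [Polynomial.leadingCoeff_eq_zero.mpr hz] at g3l
    exact pow_ne_zero h hCth g3l.symm
  -- factor 4
  have e4 : (X - (n : Polynomial R2) + (h : Polynomial R2) - 2 * Jv - 1 + Kv : Polynomial R2)
      = Polynomial.C (1 : R2) * X
        + Polynomial.C (-(n : R2) + (h : R2) - 2 * MvPolynomial.X 0 - 1 + MvPolynomial.X 1) := by
    simp only [Jv, Kv, map_one, one_mul, map_add, map_sub, map_mul, map_ofNat, map_natCast, map_neg]
    ring
  have g4d : (rfp (X - (n : Polynomial R2) + (h : Polynomial R2) - 2 * Jv - 1 + Kv) (n+h+1)).natDegree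
      = n + h + 1 := by
    rw [e4]; exact (rfp_lin _ _ one_ne_zero (n+h+1)).1
  have g4l : (rfp (X - (n : Polynomial R2) + (h : Polynomial R2) - 2 * Jv - 1 + Kv) (n+h+1)).leadingCoeff
      = 1 := by
    rw [e4, (rfp_lin _ _ one_ne_zero (n+h+1)).2, one_pow]
  have g4ne : (rfp (X - (n : Polynomial R2) + (h : Polynomial R2) - 2 * Jv - 1 + Kv) (n+h+1)) ≠ 0 := by
    intro hz
    rw [Polynomial.leadingCoeff_eq_zero.mpr hz] at g4l
    exact one_ne_zero g4l.symm
  constructor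
  · unfold Dnhl
    rw [Polynomial.natDegree_mul (mul_ne_zero (mul_ne_zero g1ne g2ne) g3ne) g4ne,
      Polynomial.natDegree_mul (mul_ne_zero g1ne g2ne) g3ne,
      Polynomial.natDegree_mul g1ne g2ne, g1d, g2d, g3d, g4d]
    omega
  · unfold Dnhl
    rw [Polynomial.leadingCoeff_mul, Polynomial.leadingCoeff_mul, Polynomial.leadingCoeff_mul,
      g1l, g2l, g3l, g4l]
    rw [← map_pow, mul_one, mul_one, ← map_mul]

lemma tdeg_C_mul (r : ℝ) (hr : r ≠ 0) (q : R2) :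
    (MvPolynomial.C r * q).totalDegree = q.totalDegree := by
  apply le_antisymm
  · exact le_trans (MvPolynomial.totalDegree_mul _ _) (by simp)
  · conv_lhs => rw [show q = MvPolynomial.C r⁻¹ * (MvPolynomial.C r * q) by
      rw [← mul_assoc, ← map_mul, inv_mul_cancel₀ hr, map_one, one_mul]]
    exact le_trans (MvPolynomial.totalDegree_mul _ _) (by simp)

lemma Q_bound (Dp Pp Q Rem : Polynomial R2) (m N : ℕ) (cD : ℝ) (hcD : cD ≠ 0)
    (hDdeg : Dp.natDegree = m) (hDlc : Dp.leadingCoeff = MvPolynomial.C cD)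
    (hHWD : HW Dp m) (hHWP : HW Pp (m + N))
    (hdiv : Pp = Dp * Q + Rem) (hRem : Rem.degree < (m : WithBot ℕ)) :
    ∀ i, Q.coeff i ≠ 0 → (Q.coeff i).totalDegree + i ≤ N := by
  have hCcD : (MvPolynomial.C cD : R2) ≠ 0 := by simpa using hcD
  have hDne : Dp ≠ 0 := by
    intro hz
    rw [Polynomial.leadingCoeff_eq_zero.mpr hz] at hDlc
    exact hCcD hDlc.symm
  have hPdeg : Pp.natDegree ≤ m + N := by
    rw [Polynomial.natDegree_le_iff_coeff_eq_zero]
    intro e he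
    by_contra hne
    have := hHWP e hne
    omega
  have hRemDeg : Rem.natDegree ≤ m := Polynomial.natDegree_le_iff_degree_le.mpr (le_of_lt hRem)
  have hQhigh : ∀ i, N < i → Q.coeff i = 0 := by
    intro i hi
    rcases eq_or_ne Q 0 with rfl | hQ
    · simp
    · have hDQ : Dp * Q = Pp - Rem := by rw [hdiv]; ring
      have h1 : (Pp - Rem).natDegree ≤ m + N :=
        le_trans (Polynomial.natDegree_sub_le _ _) (by omega)
      have h2 : (Dp * Q).natDegree = m + Q.natDegree := by
        rw [Polynomial.natDegree_mul hDne hQ, hDdeg]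
      rw [hDQ] at h2
      have : Q.natDegree ≤ N := by omega
      exact Polynomial.coeff_eq_zero_of_natDegree_lt (by omega)
  have key : ∀ t i, i + t = N → Q.coeff i ≠ 0 → (Q.coeff i).totalDegree + i ≤ N := by
    intro t
    induction t using Nat.strong_induction_on with
    | _ t IH =>
      intro i hit hne
      have hiN : i ≤ N := by omega
      have hco : Pp.coeff (m+i) = (Dp*Q).coeff (m+i) + Rem.coeff (m+i) := by
        rw [hdiv, Polynomial.coeff_add]
      have hRz : Rem.coeff (m+i) = 0 :=
        Polynomial.coeff_eq_zero_of_degree_lt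
          (lt_of_lt_of_le hRem (by exact_mod_cast Nat.le_add_right m i))
      have hmem : ((m, i) : ℕ × ℕ) ∈ Finset.HasAntidiagonal.antidiagonal (m+i) :=
        Finset.HasAntidiagonal.mem_antidiagonal.mpr rfl
      set S := ∑ p ∈ (Finset.HasAntidiagonal.antidiagonal (m+i)).erase (m, i), Dp.coeff p.1 * Q.coeff p.2 with hS
      have hsplit : (Dp*Q).coeff (m+i) = Dp.coeff m * Q.coeff i + S := by
        rw [Polynomial.coeff_mul]
        exact (Finset.add_sum_erase (Finset.HasAntidiagonal.antidiagonal (m+i)) (fun p : ℕ × ℕ => Dp.coeff p.1 * Q.coeff p.2) hmem).symm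
      have hDm : Dp.coeff m = MvPolynomial.C cD := by
        rw [← hDdeg, Polynomial.coeff_natDegree, hDlc]
      have hkey : MvPolynomial.C cD * Q.coeff i = Pp.coeff (m+i) - S := by
        rw [hco, hsplit, hDm, hRz]; ring
      have ht1 : (Pp.coeff (m+i)).totalDegree ≤ N - i := by
        rcases eq_or_ne (Pp.coeff (m+i)) 0 with hz | hz
        · rw [hz]; simp
        · have := hHWP (m+i) hz; omega
      have ht2 : S.totalDegree ≤ N - i := by
        rw [hS]
        apply le_trans (MvPolynomial.totalDegree_finset_sum _ _)
        apply Finset.sup_le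
        rintro ⟨a, b⟩ hab
        show (Dp.coeff a * Q.coeff b).totalDegree ≤ N - i
        obtain ⟨hpne, hmem2⟩ := Finset.mem_erase.mp hab
        have habe : a + b = m + i := Finset.HasAntidiagonal.mem_antidiagonal.mp hmem2
        rcases eq_or_ne (Dp.coeff a) 0 with h0 | h0
        · simp [h0]
        rcases eq_or_ne (Q.coeff b) 0 with h1 | h1
        · simp [h1]
        have ham : a ≤ m := by
          by_contra hgt
          exact h0 (Polynomial.coeff_eq_zero_of_natDegree_lt (by omega))
        have hbN : b ≤ N := by
          by_contra hgt
          exact h1 (hQhigh b (by omega))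
        have hbi : i < b := by
          rcases Nat.lt_or_ge i b with h | h
          · exact h
          · exfalso
            have hbi2 : b = i := by omega
            have : a = m := by omega
            exact hpne (by rw [this, hbi2])
        have hIH := IH (N - b) (by omega) b (by omega) h1
        have hD := hHWD a h0
        have := MvPolynomial.totalDegree_mul (Dp.coeff a) (Q.coeff b)
        omega
      have hT : (Q.coeff i).totalDegree = (Pp.coeff (m+i) - S).totalDegree := by
        rw [← hkey, tdeg_C_mul cD hcD]
      have := MvPolynomial.totalDegree_sub (Pp.coeff (m+i)) S
      have hmax : max (Pp.coeff (m+i)).totalDegree S.totalDegree ≤ N - i := max_le ht1 ht2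
      omega
  intro i hne
  rcases le_or_gt i N with hiN | hiN
  · exact key (N - i) i (by omega) hne
  · exact absurd (hQhigh i hiN) hne

lemma sign_flip (M v : ℕ) (hv : v ≤ M) : (-1:ℝ)^(M-v) = (-1:ℝ)^M * (-1:ℝ)^v := by
  have h1 : (-1:ℝ)^(M-v) * (-1:ℝ)^v = (-1:ℝ)^M := by
    rw [← pow_add, Nat.sub_add_cancel hv]
  have h2 : ((-1:ℝ)^v) * ((-1:ℝ)^v) = 1 := by
    rw [← pow_add, ← two_mul, pow_mul]
    norm_num
  linear_combination ((-1:ℝ)^v) * h1 - ((-1:ℝ)^(M-v)) * h2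

lemma eval_expand (q : R2) (u v : ℕ) :
    MvPolynomial.eval (fun x : Fin 2 => if x = 0 then (u:ℝ) else (v:ℝ)) q
      = ∑ d ∈ q.support, MvPolynomial.coeff d q * (u:ℝ)^(d 0) * (v:ℝ)^(d 1) := by
  rw [MvPolynomial.eval_eq']
  apply Finset.sum_congr rfl
  intro d _
  rw [Fin.prod_univ_two]
  norm_num
  ring

lemma double_sum_eq (h M l : ℕ) (q : R2) :
    ∑ u ∈ Finset.range h, (-1:ℝ)^u * ((h-1).choose u : ℝ) * (u:ℝ)^l *
      ∑ v ∈ Finset.range (M+1), (-1:ℝ)^(M-v) * (M.choose v : ℝ) *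
        MvPolynomial.eval (fun x : Fin 2 => if x = 0 then (u:ℝ) else (v:ℝ)) q
    = ∑ d ∈ q.support, MvPolynomial.coeff d q *
        (∑ u ∈ Finset.range h, (-1:ℝ)^u * ((h-1).choose u : ℝ) * (u:ℝ)^(l + d 0)) *
        ((-1:ℝ)^M * ∑ v ∈ Finset.range (M+1), (-1:ℝ)^v * (M.choose v : ℝ) * (v:ℝ)^(d 1)) := by
  have step1 : ∀ u : ℕ,
      (∑ v ∈ Finset.range (M+1), (-1:ℝ)^(M-v) * (M.choose v : ℝ) *
        MvPolynomial.eval (fun x : Fin 2 => if x = 0 then (u:ℝ) else (v:ℝ)) q)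
      = ∑ d ∈ q.support, MvPolynomial.coeff d q * (u:ℝ)^(d 0) *
          ((-1:ℝ)^M * ∑ v ∈ Finset.range (M+1), (-1:ℝ)^v * (M.choose v : ℝ) * (v:ℝ)^(d 1)) := by
    intro u
    have e1 : ∀ v ∈ Finset.range (M+1),
        (-1:ℝ)^(M-v) * (M.choose v : ℝ) *
          MvPolynomial.eval (fun x : Fin 2 => if x = 0 then (u:ℝ) else (v:ℝ)) q
        = ∑ d ∈ q.support, MvPolynomial.coeff d q * (u:ℝ)^(d 0) *
            ((-1:ℝ)^M * ((-1:ℝ)^v * (M.choose v : ℝ) * (v:ℝ)^(d 1))) := by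
      intro v hv
      rw [eval_expand, Finset.mul_sum]
      apply Finset.sum_congr rfl
      intro d _
      rw [sign_flip M v (by have := Finset.mem_range.mp hv; omega)]
      ring
    rw [Finset.sum_congr rfl e1, Finset.sum_comm]
    apply Finset.sum_congr rfl
    intro d _
    rw [Finset.mul_sum, Finset.mul_sum]
  have e2 : ∀ u ∈ Finset.range h,
      (-1:ℝ)^u * ((h-1).choose u : ℝ) * (u:ℝ)^l *
        ∑ v ∈ Finset.range (M+1), (-1:ℝ)^(M-v) * (M.choose v : ℝ) *
          MvPolynomial.eval (fun x : Fin 2 => if x = 0 then (u:ℝ) else (v:ℝ)) q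
      = ∑ d ∈ q.support, MvPolynomial.coeff d q *
          ((-1:ℝ)^u * ((h-1).choose u : ℝ) * (u:ℝ)^(l + d 0)) *
          ((-1:ℝ)^M * ∑ v ∈ Finset.range (M+1), (-1:ℝ)^v * (M.choose v : ℝ) * (v:ℝ)^(d 1)) := by
    intro u _
    rw [step1 u, Finset.mul_sum]
    apply Finset.sum_congr rfl
    intro d _
    rw [pow_add]
    ring
  rw [Finset.sum_congr rfl e2, Finset.sum_comm]
  apply Finset.sum_congr rfl
  intro d _
  rw [← Finset.sum_mul, ← Finset.mul_sum]
/-- Cancellations in the alternating double sums of evaluations of the quotient coefficients: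
(a) for `1 ≤ i ≤ n−l−1` the double sum against `q^{(n,h)}_{n−l−1−i} = Q.coeff i` vanishes;
(b) for `i = 0` it equals `(−1)^{h−1}(h−1)!(n−h)!·c^{(λ,θ)}_{n,h,l}` when `l ≤ h−1`
(where `c^{(λ,θ)}_{n,h,l}` is the coefficient of `j^{h−l−1}k^{n−h}` in `q^{(n,h)}_{n−l−1} =
Q.coeff 0`), and vanishes when `h ≤ l ≤ n−1`. -/
theorem stmt_7 (n h l : ℕ) (hn : 1 ≤ n) (hh1 : 1 ≤ h) (hhn : h ≤ n) (hl : l ≤ n - 1)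
    (lam th : ℝ) (hlam0 : 0 < lam) (hlam1 : lam ≤ 1) (hth0 : 0 < th) (hth1 : th < 1)
    (Q Rem : Polynomial R2)
    (hdiv : Pnh n h lam th = Dnhl n h l lam th * Q + Rem)
    (hRem : Rem.degree < ((n + 2 * h + l + 3 : ℕ) : WithBot ℕ)) :
    (∀ i : ℕ, 1 ≤ i → i ≤ n - l - 1 →
      ∑ u ∈ Finset.range h, (-1 : ℝ) ^ u * ((h - 1).choose u : ℝ) * (u : ℝ) ^ l *
        ∑ v ∈ Finset.range (n - h + 1), (-1 : ℝ) ^ (n - h - v) * ((n - h).choose v : ℝ) *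
          MvPolynomial.eval (fun x : Fin 2 => if x = 0 then (u : ℝ) else (v : ℝ)) (Q.coeff i)
        = 0) ∧
    (l ≤ h - 1 →
      ∑ u ∈ Finset.range h, (-1 : ℝ) ^ u * ((h - 1).choose u : ℝ) * (u : ℝ) ^ l *
        ∑ v ∈ Finset.range (n - h + 1), (-1 : ℝ) ^ (n - h - v) * ((n - h).choose v : ℝ) *
          MvPolynomial.eval (fun x : Fin 2 => if x = 0 then (u : ℝ) else (v : ℝ)) (Q.coeff 0)
        = (-1 : ℝ) ^ (h - 1) * ((h - 1).factorial : ℝ) * ((n - h).factorial : ℝ) *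
            MvPolynomial.coeff (Finsupp.single 0 (h - l - 1) + Finsupp.single 1 (n - h))
              (Q.coeff 0)) ∧
    (h ≤ l →
      ∑ u ∈ Finset.range h, (-1 : ℝ) ^ u * ((h - 1).choose u : ℝ) * (u : ℝ) ^ l *
        ∑ v ∈ Finset.range (n - h + 1), (-1 : ℝ) ^ (n - h - v) * ((n - h).choose v : ℝ) *
          MvPolynomial.eval (fun x : Fin 2 => if x = 0 then (u : ℝ) else (v : ℝ)) (Q.coeff 0)
        = 0) := by
  have hth' : th ≠ 0 := ne_of_gt hth0
  have hltz : lam * th ≠ 0 := mul_ne_zero (ne_of_gt hlam0) hth'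
  obtain ⟨hDdeg, hDlc⟩ := D_facts n h l lam th hltz hth'
  have hcD : lam * th * th ^ h ≠ 0 := by positivity
  have hHWP : HW (Pnh n h lam th) ((n + 2*h + l + 3) + (n - l - 1)) := by
    rw [show (n + 2*h + l + 3) + (n - l - 1) = 2*n + 2*h + 2 from by omega]
    exact HW_P n h lam th
  have hQb := Q_bound (Dnhl n h l lam th) (Pnh n h lam th) Q Rem (n + 2*h + l + 3) (n - l - 1)
    (lam * th * th ^ h) hcD hDdeg hDlc (HW_D n h l lam th) hHWP hdiv hRem
  have hsupp : ∀ i : ℕ, ∀ d ∈ (Q.coeff i).support, d 0 + d 1 + i ≤ n - l - 1 := by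
    intro i d hd
    have hne : Q.coeff i ≠ 0 := by
      intro hz; rw [hz] at hd; simp at hd
    have h1 := hQb i hne
    have h2 : d.sum (fun _ e => e) ≤ (Q.coeff i).totalDegree := MvPolynomial.le_totalDegree hd
    have h3 : d.sum (fun _ e => e) = d 0 + d 1 := by
      rw [Finsupp.sum_fintype _ _ (fun _ => rfl), Fin.sum_univ_two]
    omega
  have hU0 : ∀ p : ℕ, p < h - 1 →
      (∑ u ∈ Finset.range h, (-1:ℝ)^u * ((h-1).choose u : ℝ) * (u:ℝ)^p) = 0 := by
    intro p hp
    have := fd_lt (h-1) p hp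
    rwa [show h - 1 + 1 = h from by omega] at this
  have hU1 : (∑ u ∈ Finset.range h, (-1:ℝ)^u * ((h-1).choose u : ℝ) * (u:ℝ)^(h-1))
      = (-1:ℝ)^(h-1) * ((h-1).factorial : ℝ) := by
    have := fd_eq (h-1)
    rwa [show h - 1 + 1 = h from by omega] at this
  have hV0 : ∀ p : ℕ, p < n - h →
      (∑ v ∈ Finset.range (n-h+1), (-1:ℝ)^v * ((n-h).choose v : ℝ) * (v:ℝ)^p) = 0 :=
    fun p hp => fd_lt (n-h) p hp
  have hV1 := fd_eq (n-h)
  refine ⟨?_, ?_, ?_⟩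
  · -- part (a)
    intro i hi1 hi2
    rw [double_sum_eq h (n-h) l (Q.coeff i)]
    apply Finset.sum_eq_zero
    intro d hd
    have hb := hsupp i d hd
    by_cases hd1 : d 1 < n - h
    · rw [hV0 (d 1) hd1]; ring
    · rw [hU0 (l + d 0) (by omega)]; ring
  · -- part (b)
    intro hlh
    rw [double_sum_eq h (n-h) l (Q.coeff 0)]
    set dstar : Fin 2 →₀ ℕ := Finsupp.single 0 (h - l - 1) + Finsupp.single 1 (n - h) with hds
    have hd0 : dstar 0 = h - l - 1 := by
      simp [hds, Finsupp.single_apply]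
    have hd1 : dstar 1 = n - h := by
      simp [hds, Finsupp.single_apply]
    have huniq : ∀ d : Fin 2 →₀ ℕ, d 0 = h - l - 1 → d 1 = n - h → d = dstar := by
      intro d h0 h1
      ext x
      fin_cases x
      · simpa [hd0] using h0
      · simpa [hd1] using h1
    have hside : ∀ d ∈ (Q.coeff 0).support, d ≠ dstar →
        MvPolynomial.coeff d (Q.coeff 0) *
          (∑ u ∈ Finset.range h, (-1:ℝ)^u * ((h-1).choose u : ℝ) * (u:ℝ)^(l + d 0)) *
          ((-1:ℝ)^(n-h) * ∑ v ∈ Finset.range (n-h+1), (-1:ℝ)^v * ((n-h).choose v : ℝ) * (v:ℝ)^(d 1))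
          = 0 := by
      intro d hd hne
      have hb := hsupp 0 d hd
      by_cases hdd1 : d 1 < n - h
      · rw [hV0 (d 1) hdd1]; ring
      · by_cases hdd0 : l + d 0 < h - 1
        · rw [hU0 (l + d 0) hdd0]; ring
        · exact absurd (huniq d (by omega) (by omega)) hne
    have hpow : ((-1:ℝ)^(n-h)) * ((-1:ℝ)^(n-h)) = 1 := by
      rw [← pow_add, ← two_mul, pow_mul]; norm_num
    by_cases hmem : dstar ∈ (Q.coeff 0).support
    · rw [Finset.sum_eq_single_of_mem dstar hmem hside]
      rw [hd0, hd1, show l + (h - l - 1) = h - 1 from by omega, hU1, hV1]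
      linear_combination (MvPolynomial.coeff dstar (Q.coeff 0) *
        ((-1:ℝ)^(h-1) * ((h-1).factorial : ℝ)) * ((n-h).factorial : ℝ)) * hpow
    · rw [Finset.sum_eq_zero (fun d hd => hside d hd (fun he => hmem (he ▸ hd))),
        MvPolynomial.notMem_support_iff.mp hmem]
      ring
  · -- part (c)
    intro hle
    rw [double_sum_eq h (n-h) l (Q.coeff 0)]
    apply Finset.sum_eq_zero
    intro d hd
    have hb := hsupp 0 d hd
    rw [hV0 (d 1) (by omega)]
    ring
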